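/- arXiv:1606.01029 — 2 statements merged into one kernel-verified Lean document; each statement's English description precedes it below -/
import Mathlib

section
/- Let k be an algebraically closed field of characteristic p > 0, let K = Frac(W(k)) be the fraction field of the Witt vectors, and let φ be the Frobenius automorphism of K. Then every one-dimensional isocrystal (V, φ_V) over k (i.e., a one-dimensional K-vector space with a φ-semilinear bijection φ_V) is isomorphic to the standard isocrystal of slope m for a unique integer m, where the standard isocrystal of slope m is K with Frobenius p^m · φ. -/
open scoped Isocrystal

set_option linter.unusedSectionVars false

open WittVector Module

noncomputable section

namespace OneDimAux

variable (p : ℕ) [Fact p.Prime] (k : Type*) [Field k] [CharP k p] [PerfectRing k p]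

local notation "𝕎" => WittVector p

lemma key_lt {x y : ℕ} {u v : (𝕎 k)ˣ} (hlt : x < y)
    (h : (p : 𝕎 k) ^ x * u = (p : 𝕎 k) ^ y * v) : False := by
  have hp : Irreducible (p : 𝕎 k) := WittVector.irreducible p
  have hpn : (p : 𝕎 k) ≠ 0 := WittVector.p_nonzero p k
  have hux : (u : 𝕎 k) = (p : 𝕎 k) ^ (y - x) * v := by
    have hx : (p : 𝕎 k) ^ x ≠ 0 := pow_ne_zero _ hpn
    refine mul_left_cancel₀ hx ?_
    rw [h, ← mul_assoc, ← pow_add]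
    congr 2
    omega
  have hu : IsUnit ((p : 𝕎 k) ^ (y - x) * (v : 𝕎 k)) := hux ▸ u.isUnit
  have h1 : IsUnit ((p : 𝕎 k) ^ (y - x)) := isUnit_of_mul_isUnit_left hu
  have h2 : IsUnit (p : 𝕎 k) := (isUnit_pow_iff (by omega : y - x ≠ 0)).mp h1
  exact hp.not_isUnit h2

lemma pow_mul_unit_inj {x y : ℕ} {u v : (𝕎 k)ˣ}
    (h : (p : 𝕎 k) ^ x * u = (p : 𝕎 k) ^ y * v) : x = y := by
  rcases lt_trichotomy x y with h' | h' | h'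
  · exact absurd h (fun h => key_lt p k h' h)
  · exact h'
  · exact absurd h.symm (fun h => key_lt p k h' h)

lemma slope_eq {m m' : ℤ} {c : K(p, k)} (hc : c ≠ 0)
    (h : (p : K(p, k)) ^ m * φ(p, k) c = (p : K(p, k)) ^ m' * c) : m = m' := by
  set F := frobeniusEquiv p k with hF
  have hφa : ∀ x : 𝕎 k, φ(p, k) (algebraMap (𝕎 k) K(p, k) x)
      = algebraMap (𝕎 k) K(p, k) (F x) := fun x =>
    IsFractionRing.ringEquivOfRingEquiv_algebraMap (frobeniusEquiv p k) x
  obtain ⟨r, s, hs, hc_eq⟩ := IsFractionRing.div_surjective (A := 𝕎 k) c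
  have hinj : Function.Injective (algebraMap (𝕎 k) K(p, k)) := IsFractionRing.injective _ _
  have hs0 : s ≠ 0 := nonZeroDivisors.ne_zero hs
  have hsK : algebraMap (𝕎 k) K(p, k) s ≠ 0 := fun h0 => hs0 (hinj (by simpa using h0))
  have hr0 : r ≠ 0 := by
    rintro rfl
    simp at hc_eq
    exact hc hc_eq.symm
  have hrK : algebraMap (𝕎 k) K(p, k) r ≠ 0 := fun h0 => hr0 (hinj (by simpa using h0))
  have hFs0 : F s ≠ 0 := fun h0 => hs0 (F.injective (by simpa using h0))
  have hFsK : algebraMap (𝕎 k) K(p, k) (F s) ≠ 0 := fun h0 => hFs0 (hinj (by simpa using h0))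
  have hpK : (p : K(p, k)) ≠ 0 := WittVector.FractionRing.p_nonzero p k
  -- φ c
  have hφc : φ(p, k) c = algebraMap (𝕎 k) K(p, k) (F r) / algebraMap (𝕎 k) K(p, k) (F s) := by
    rw [← hc_eq, map_div₀, hφa, hφa]
  obtain ⟨N, hN⟩ : ∃ N : ℤ, N = (m.natAbs + m'.natAbs : ℤ) := ⟨_, rfl⟩
  have hmN : 0 ≤ m + N := by rw [hN]; omega
  have hm'N : 0 ≤ m' + N := by rw [hN]; omega
  set a : ℕ := (m + N).toNat with ha
  set b : ℕ := (m' + N).toNat with hb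
  have hEq : (p : K(p, k)) ^ a * φ(p, k) c = (p : K(p, k)) ^ b * c := by
    have ha' : ((a : ℤ)) = m + N := by rw [ha]; exact Int.toNat_of_nonneg hmN
    have hb' : ((b : ℤ)) = m' + N := by rw [hb]; exact Int.toNat_of_nonneg hm'N
    rw [← zpow_natCast (p : K(p, k)) a, ← zpow_natCast (p : K(p, k)) b, ha', hb',
      zpow_add₀ hpK, zpow_add₀ hpK]
    linear_combination (p : K(p, k)) ^ N * h
  -- clear denominators
  have hW : (p : 𝕎 k) ^ a * F r * s = (p : 𝕎 k) ^ b * r * F s := by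
    apply hinj
    have : (p : K(p, k)) ^ a * algebraMap (𝕎 k) K(p, k) (F r) * algebraMap (𝕎 k) K(p, k) s
        = (p : K(p, k)) ^ b * algebraMap (𝕎 k) K(p, k) r * algebraMap (𝕎 k) K(p, k) (F s) := by
      rw [hφc, ← hc_eq] at hEq
      field_simp at hEq
      linear_combination hEq
    simpa [map_mul, map_pow, map_natCast] using this
  -- factor out powers of p
  obtain ⟨i, u, hru⟩ := WittVector.exists_eq_pow_p_mul' r hr0
  obtain ⟨j, v, hsv⟩ := WittVector.exists_eq_pow_p_mul' s hs0
  let u' : (𝕎 k)ˣ := Units.map F.toRingHom.toMonoidHom u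
  let v' : (𝕎 k)ˣ := Units.map F.toRingHom.toMonoidHom v
  have hFr : F r = (p : 𝕎 k) ^ i * u' := by
    rw [hru, map_mul, map_pow, map_natCast]; rfl
  have hFs : F s = (p : 𝕎 k) ^ j * v' := by
    rw [hsv, map_mul, map_pow, map_natCast]; rfl
  have hfinal : (p : 𝕎 k) ^ (a + (i + j)) * ((u' * v : (𝕎 k)ˣ) : 𝕎 k)
      = (p : 𝕎 k) ^ (b + (i + j)) * ((u * v' : (𝕎 k)ˣ) : 𝕎 k) := by
    rw [hFr, hFs] at hW
    rw [hru, hsv] at hW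
    simp only [Units.val_mul, pow_add]
    linear_combination hW
  have := pow_mul_unit_inj p k hfinal
  omega

end OneDimAux


/-- **Classification of one-dimensional isocrystals.**
Let `k` be an algebraically closed field of characteristic `p > 0`, `K(p, k)` the fraction
field of its Witt vectors, with Frobenius automorphism `φ(p, k)`.  Every one-dimensional
isocrystal `V` over `k` is isomorphic to the standard one-dimensional isocrystal of slope `m`
(namely `K(p, k)` with Frobenius `p ^ m • φ(p, k)`) for a *unique* integer `m`. -/
theorem one_dimensional_isocrystal_classification_unique
    (p : ℕ) [Fact p.Prime] (k : Type*) [Field k] [IsAlgClosed k] [CharP k p]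
    (V : Type*) [AddCommGroup V] [WittVector.Isocrystal p k V]
    (h_dim : Module.finrank K(p, k) V = 1) :
    ∃! m : ℤ, Nonempty (WittVector.StandardOneDimIsocrystal p k m ≃ᶠⁱ[p, k] V) := by
  obtain ⟨m, ⟨e⟩⟩ := WittVector.isocrystal_classification p k V h_dim
  refine ⟨m, ⟨e⟩, ?_⟩
  rintro m' ⟨e'⟩
  -- compose to get a linear equivalence between the two standard isocrystals
  let g : WittVector.StandardOneDimIsocrystal p k m' ≃ₗ[K(p, k)]
      WittVector.StandardOneDimIsocrystal p k m :=
    e'.toLinearEquiv.trans e.toLinearEquiv.symm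
  let x₀ : WittVector.StandardOneDimIsocrystal p k m' := show K(p, k) from 1
  have hx₀ : x₀ ≠ 0 := one_ne_zero (α := K(p, k))
  let c : K(p, k) := show K(p, k) from g x₀
  have hc : c ≠ 0 := fun h0 => hx₀ (g.injective (by rw [map_zero]; exact h0))
  have hkey : ((p : K(p, k)) ^ m • φ(p, k) (g x₀) : WittVector.StandardOneDimIsocrystal p k m)
      = g ((p : K(p, k)) ^ m' • φ(p, k) x₀) := by
    have h1 := e.frob_equivariant (g x₀)
    have h2 := e'.frob_equivariant x₀
    rw [WittVector.StandardOneDimIsocrystal.frobenius_apply] at h1 h2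
    apply e.toLinearEquiv.injective
    rw [← h1]
    have h3 : e.toLinearEquiv (g x₀) = e'.toLinearEquiv x₀ := e.toLinearEquiv.apply_symm_apply _
    rw [h3, h2]
    show _ = e.toLinearEquiv (e.toLinearEquiv.symm _)
    rw [LinearEquiv.apply_symm_apply]
    rfl
  have hφ1 : φ(p, k) (show K(p, k) from x₀) = 1 := map_one _
  have hsc : (p : K(p, k)) ^ m * φ(p, k) c = (p : K(p, k)) ^ m' * c := by
    have : ((p : K(p, k)) ^ m • φ(p, k) (g x₀) : WittVector.StandardOneDimIsocrystal p k m)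
        = g ((p : K(p, k)) ^ m' • φ(p, k) x₀) := hkey
    replace this := this.trans (g.map_smul _ _)
    have h1 : φ(p, k) (x₀ : WittVector.StandardOneDimIsocrystal p k m') = (1 : K(p, k)) := hφ1
    exact this.trans (congrArg (fun y : WittVector.StandardOneDimIsocrystal p k m' =>
      ((p : K(p, k)) ^ m' • g y : WittVector.StandardOneDimIsocrystal p k m)) h1)
  exact (OneDimAux.slope_eq p k hc hsc).symm
end
end

section
/- Let A be a group acting by automorphisms on a Dedekind domain R with fraction field K, let M be a finitely generated R-module with a compatible semilinear A-action. If the action of A on the set of maximal ideals of R has no finite orbit, then the torsion submodule of M is zero; i.e., M is projective. -/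
open Submodule

/-- The localization of a torsion-free module over a domain is torsion-free. -/
lemma locNoZeroSMulDivisors {R : Type*} [CommRing R] [IsDomain R]
    {M : Type*} [AddCommGroup M] [Module R M] [NoZeroSMulDivisors R M]
    (S : Submonoid R) (hS : (0 : R) ∉ S) :
    NoZeroSMulDivisors (Localization S) (LocalizedModule S M) := by
  constructor
  intro c x h
  induction c using Localization.induction_on with
  | H p =>
    obtain ⟨r, s⟩ := p
    induction x using LocalizedModule.induction_on with
    | h m t =>
      rw [LocalizedModule.mk_smul_mk] at h
      rw [show (0 : LocalizedModule S M) = LocalizedModule.mk 0 1 from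
        (LocalizedModule.zero_mk 1).symm, LocalizedModule.mk_eq] at h
      obtain ⟨u, hu⟩ := h
      simp only [one_smul, smul_zero] at hu
      rw [Submonoid.smul_def, ← mul_smul] at hu
      rcases smul_eq_zero.mp hu with h0 | h0
      · rcases mul_eq_zero.mp h0 with h0 | h0
        · exact absurd (h0 ▸ u.2) hS
        · left
          rw [h0, Localization.mk_zero]
      · right
        rw [h0, LocalizedModule.zero_mk]

instance multiplicativeAddAutCoeFun {M : Type*} [AddCommGroup M] :
    CoeFun (Multiplicative (AddAut M)) (fun _ => M → M) :=
  ⟨fun f => ((Multiplicative.toAdd f : AddAut M) : M → M)⟩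

/-- **Torsion vanishes under a semilinear action with no finite orbit on maximal ideals.**
Let a group `A` act by ring automorphisms `φ` on a Dedekind domain `R`, and let `M` be a
finitely generated `R`-module with a compatible semilinear `A`-action `ρ`
(`ρ a (r • m) = φ a r • ρ a m`).  If the induced action of `A` on the set of maximal ideals
of `R` has no finite orbit, then the torsion submodule of `M` is zero; i.e., `M` is
projective. -/
theorem torsion_eq_bot_of_no_finite_orbit
    {A R : Type*} [Group A] [CommRing R] [IsDomain R] [IsDedekindDomain R]
    (φ : A →* RingAut R)
    {M : Type*} [AddCommGroup M] [Module R M] [Module.Finite R M]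
    (ρ : A →* Multiplicative (AddAut M))
    (hsemilinear : ∀ (a : A) (r : R) (m : M), Multiplicative.toAdd (ρ a) (r • m) = (φ a r) • (Multiplicative.toAdd (ρ a) m))
    (horbit : ∀ I : Ideal R, I.IsMaximal →
      {J : Ideal R | ∃ a : A, J = I.map (φ a : R →+* R)}.Infinite) :
    Submodule.torsion R M = ⊥ ∧ Module.Projective R M := by
  classical
  -- auxiliary facts about the actions
  have hρinv : ∀ (a : A) (m : M), ρ a (ρ a⁻¹ m) = m := by
    intro a m
    have : (ρ a) ((ρ a⁻¹) m) = ((ρ a) * (ρ a⁻¹)) m := rfl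
    rw [this, ← map_mul, mul_inv_cancel, map_one]
    rfl
  have hφinv : ∀ (a : A) (r : R), φ a (φ a⁻¹ r) = r := by
    intro a r
    have : (φ a) ((φ a⁻¹) r) = ((φ a) * (φ a⁻¹)) r := rfl
    rw [this, ← map_mul, mul_inv_cancel, map_one]
    rfl
  -- the torsion submodule is stable under the action
  have hρT : ∀ (a : A), ∀ m ∈ Submodule.torsion R M, ρ a m ∈ Submodule.torsion R M := by
    intro a m hm
    obtain ⟨s, hs⟩ := (Submodule.mem_torsion_iff m).mp hm
    refine (Submodule.mem_torsion_iff _).mpr ⟨⟨φ a s, ?_⟩, ?_⟩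
    · refine mem_nonZeroDivisors_of_ne_zero ?_
      have hs0 : (s : R) ≠ 0 := nonZeroDivisors.coe_ne_zero s
      exact fun h => hs0 ((φ a).toEquiv.injective (by simpa using h))
    · show φ a s • ρ a m = 0
      rw [← hsemilinear]
      have : (s : R) • m = 0 := hs
      rw [this, map_zero]
  by_cases hT : Submodule.torsion R M = ⊥
  · refine ⟨hT, ?_⟩
    haveI : NoZeroSMulDivisors R M := by
      haveI := isTorsionFree_iff_torsion_eq_bot.mpr hT
      exact ⟨smul_eq_zero.mp⟩
    haveI : Module.FinitePresentation R M := Module.finitePresentation_of_finite R M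
    apply Module.projective_of_localization_maximal
    intro P hP
    have hP0 : P ≠ ⊥ := by
      rintro rfl
      refine horbit ⊥ hP ((Set.finite_singleton (⊥ : Ideal R)).subset ?_)
      rintro J ⟨a, rfl⟩
      simp [Ideal.map_bot]
    haveI : IsDiscreteValuationRing (Localization.AtPrime P) :=
      IsLocalization.AtPrime.isDiscreteValuationRing_of_dedekind_domain R hP0 _
    have h0P : (0 : R) ∉ P.primeCompl := fun h => h P.zero_mem
    haveI : NoZeroSMulDivisors (Localization.AtPrime P)
        (LocalizedModule P.primeCompl M) := locNoZeroSMulDivisors _ h0P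
    haveI : Module.Finite (Localization.AtPrime P) (LocalizedModule P.primeCompl M) :=
      Module.Finite.of_isLocalizedModule P.primeCompl
        (LocalizedModule.mkLinearMap P.primeCompl M)
    haveI : Module.Free (Localization.AtPrime P) (LocalizedModule P.primeCompl M) :=
      Module.free_of_finite_type_torsion_free'
    infer_instance
  · -- derive a contradiction
    exfalso
    set T := Submodule.torsion R M with hTdef
    haveI : IsNoetherian R M := inferInstance
    haveI : Module.Finite R T := Module.Finite.iff_fg.mpr (IsNoetherian.noetherian T)
    have htors : Module.IsTorsion R T := Submodule.torsion_isTorsion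
    have hann := Submodule.annihilator_top_inter_nonZeroDivisors htors
    obtain ⟨r, hrann, hrnzd⟩ := hann
    set J : Ideal R := T.annihilator with hJdef
    have hrJ : r ∈ J := by
      rw [hJdef, Submodule.mem_annihilator]
      intro m hm
      have := Submodule.mem_annihilator.mp hrann ⟨m, hm⟩ Submodule.mem_top
      exact congrArg Subtype.val this
    have hJ0 : J ≠ ⊥ := by
      intro h
      rw [h, Submodule.mem_bot] at hrJ
      exact nonZeroDivisors.coe_ne_zero ⟨r, hrnzd⟩ hrJ
    -- J is proper
    obtain ⟨m, hmT, hm0⟩ := Submodule.exists_mem_ne_zero_of_ne_bot hT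
    have hJtop : J ≠ ⊤ := by
      intro h
      have : (1 : R) ∈ J := h ▸ Submodule.mem_top
      have := Submodule.mem_annihilator.mp this m hmT
      rw [one_smul] at this
      exact hm0 this
    obtain ⟨I, hImax, hJI⟩ := Ideal.exists_le_maximal J hJtop
    -- J is stable under φ
    have hφJ : ∀ (a : A), ∀ x ∈ J, φ a x ∈ J := by
      intro a x hx
      rw [hJdef, Submodule.mem_annihilator]
      intro n hn
      have hn' : ρ a⁻¹ n ∈ T := hρT a⁻¹ n hn
      have hx' : x • (ρ a⁻¹ n) = 0 := Submodule.mem_annihilator.mp hx _ hn'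
      calc φ a x • n = φ a x • (ρ a (ρ a⁻¹ n)) := by rw [hρinv]
        _ = ρ a (x • (ρ a⁻¹ n)) := (hsemilinear a x _).symm
        _ = 0 := by rw [hx', map_zero]
    -- hence every element of the orbit of I contains J
    have hsub : {J' : Ideal R | ∃ a : A, J' = I.map (φ a : R →+* R)} ⊆
        {P : Ideal R | P ∣ J} := by
      rintro J' ⟨a, rfl⟩
      rw [Set.mem_setOf_eq, Ideal.dvd_iff_le]
      intro x hx
      have hx' : φ a⁻¹ x ∈ I := hJI (hφJ a⁻¹ x hx)
      have : φ a (φ a⁻¹ x) ∈ Ideal.map (φ a : R →+* R) I :=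
        Ideal.mem_map_of_mem _ hx'
      rwa [hφinv] at this
    -- the set of divisors of J is finite
    have hfin : {P : Ideal R | P ∣ J}.Finite := by
      haveI := UniqueFactorizationMonoid.fintypeSubtypeDvd J hJ0
      haveI : Finite {x : Ideal R // x ∣ J} := Finite.of_fintype _
      exact Set.finite_coe_iff.mp ‹Finite {x : Ideal R // x ∣ J}›
    exact horbit I hImax (hfin.subset hsub)
end
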